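/- For every integer m ≥ 1 and real numbers 0 < r⁽¹⁾ < r⁽²⁾ < ... < r⁽ᵐ⁾, there exists a unique vector (α⁽¹⁾, ..., α⁽ᵐ⁾) of strictly positive real numbers with α⁽¹⁾ + ... + α⁽ᵐ⁾ = 1 such that for every j ∈ {2, ..., m}, 1 − e^{−α⁽ʲ⁾} = (1 − r⁽ʲ⁻¹⁾/r⁽ʲ⁾)·(1 − e^{−α⁽¹⁾}). -/

import Mathlib

lemma aux_argpos (c t : ℝ) (hc0 : 0 < c) (hc1 : c < 1) :
    0 < 1 - c * (1 - Real.exp (-t)) := by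
  nlinarith [Real.exp_pos (-t)]

lemma aux_mono (c : ℝ) (hc0 : 0 < c) (hc1 : c < 1) :
    StrictMono (fun t => -Real.log (1 - c * (1 - Real.exp (-t)))) := by
  intro s t hst
  have hs := aux_argpos c s hc0 hc1
  have ht := aux_argpos c t hc0 hc1
  have hexp : Real.exp (-t) < Real.exp (-s) := Real.exp_lt_exp.2 (by linarith)
  have hlog : Real.log (1 - c * (1 - Real.exp (-t)))
      < Real.log (1 - c * (1 - Real.exp (-s))) :=
    Real.log_lt_log ht (by nlinarith)
  simpa using by linarith

lemma aux_nonneg (c t : ℝ) (hc0 : 0 < c) (hc1 : c < 1) (ht : 0 ≤ t) :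
    0 ≤ -Real.log (1 - c * (1 - Real.exp (-t))) := by
  have he : Real.exp (-t) ≤ Real.exp 0 := Real.exp_le_exp.2 (by linarith)
  rw [Real.exp_zero] at he
  have h1 : 1 - c * (1 - Real.exp (-t)) ≤ 1 := by nlinarith
  have := Real.log_nonpos (le_of_lt (aux_argpos c t hc0 hc1)) h1
  linarith

lemma aux_pos (c t : ℝ) (hc0 : 0 < c) (hc1 : c < 1) (ht : 0 < t) :
    0 < -Real.log (1 - c * (1 - Real.exp (-t))) := by
  have he : Real.exp (-t) < Real.exp 0 := Real.exp_lt_exp.2 (by linarith)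
  rw [Real.exp_zero] at he
  have h1 : 1 - c * (1 - Real.exp (-t)) < 1 := by nlinarith
  have := Real.log_neg (aux_argpos c t hc0 hc1) h1
  linarith

lemma aux_eq (c t : ℝ) (hc0 : 0 < c) (hc1 : c < 1) :
    1 - Real.exp (-(-Real.log (1 - c * (1 - Real.exp (-t)))))
      = c * (1 - Real.exp (-t)) := by
  rw [neg_neg, Real.exp_log (aux_argpos c t hc0 hc1)]
  ring

/-- Proposition 1 (first part): existence and uniqueness of the booking limits
`α⁽¹⁾, …, α⁽ᵐ⁾`: positive, summing to 1, with
`1 − e^{−α⁽ʲ⁾} = (1 − r⁽ʲ⁻¹⁾/r⁽ʲ⁾)·(1 − e^{−α⁽¹⁾})` for `j = 2, …, m`.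
Here `r 0 = 0` and `0 < r 1 < … < r m`. -/
theorem stmt_0 (m : ℕ) (hm : 1 ≤ m) (r : ℕ → ℝ) (hr0 : r 0 = 0)
    (hr : ∀ j, j < m → r j < r (j + 1)) :
    ∃ α : ℕ → ℝ,
      ((∀ j ∈ Finset.Icc 1 m, 0 < α j) ∧
        (∑ j ∈ Finset.Icc 1 m, α j) = 1 ∧
        (∀ j ∈ Finset.Icc 2 m,
          1 - Real.exp (-(α j)) = (1 - r (j - 1) / r j) * (1 - Real.exp (-(α 1))))) ∧
      (∀ β : ℕ → ℝ,
        ((∀ j ∈ Finset.Icc 1 m, 0 < β j) ∧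
          (∑ j ∈ Finset.Icc 1 m, β j) = 1 ∧
          (∀ j ∈ Finset.Icc 2 m,
            1 - Real.exp (-(β j)) = (1 - r (j - 1) / r j) * (1 - Real.exp (-(β 1))))) →
        ∀ j ∈ Finset.Icc 1 m, β j = α j) := by
  classical
  -- r is positive on [1, m]
  have hrpos : ∀ j, 1 ≤ j → j ≤ m → 0 < r j := by
    intro j h1 h2
    induction j with
    | zero => omega
    | succ k ih =>
      rcases Nat.eq_zero_or_pos k with hk | hk
      · subst hk
        have := hr 0 (by omega)
        rw [hr0] at this
        simpa using this
      · have h3 := hr k (by omega)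
        have h4 := ih (by omega) (by omega)
        linarith
  set c : ℕ → ℝ := fun j => 1 - r (j - 1) / r j with hc
  have hc01 : ∀ j, 2 ≤ j → j ≤ m → 0 < c j ∧ c j < 1 := by
    intro j h2 hjm
    have hrj : 0 < r j := hrpos j (by omega) hjm
    have hrj1 : 0 < r (j - 1) := hrpos (j - 1) (by omega) (by omega)
    have hlt : r (j - 1) < r j := by
      have h := hr (j - 1) (by omega)
      have he : j - 1 + 1 = j := by omega
      rwa [he] at h
    have hq0 : 0 < r (j - 1) / r j := div_pos hrj1 hrj
    have hq1 : r (j - 1) / r j < 1 := (div_lt_one hrj).2 hlt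
    constructor <;> simp [hc] <;> linarith
  set g : ℕ → ℝ → ℝ :=
    fun j t => if j = 1 then t else -Real.log (1 - c j * (1 - Real.exp (-t))) with hg
  set f : ℝ → ℝ := fun t => ∑ j ∈ Finset.Icc 1 m, g j t with hf
  have hmono : StrictMono f := by
    intro s t hst
    apply Finset.sum_lt_sum_of_nonempty (Finset.nonempty_Icc.2 hm)
    intro j hj
    simp only [Finset.mem_Icc] at hj
    by_cases h1 : j = 1
    · simpa [hg, h1] using hst
    · obtain ⟨hc0, hc1⟩ := hc01 j (by omega) hj.2
      simpa [hg, h1] using aux_mono (c j) hc0 hc1 hst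
  have hcont : Continuous f := by
    apply continuous_finset_sum
    intro j hj
    by_cases h1 : j = 1
    · simp only [hg, h1, if_pos rfl]
      exact continuous_id'
    · simp only [Finset.mem_Icc] at hj
      obtain ⟨hc0, hc1⟩ := hc01 j (by omega) hj.2
      have harg : Continuous (fun t : ℝ => 1 - c j * (1 - Real.exp (-t))) := by
        continuity
      have hl := harg.log (fun t => (aux_argpos (c j) t hc0 hc1).ne')
      simp only [hg, if_neg h1]
      exact hl.neg
  have hf0 : f 0 = 0 := by
    apply Finset.sum_eq_zero
    intro j hj
    by_cases h1 : j = 1 <;> simp [hg, h1]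
  have hnonneg1 : ∀ j ∈ Finset.Icc 1 m, 0 ≤ g j 1 := by
    intro j hj
    simp only [Finset.mem_Icc] at hj
    by_cases h1 : j = 1
    · simp [hg, h1]
    · obtain ⟨hc0, hc1⟩ := hc01 j (by omega) hj.2
      simp only [hg, if_neg h1]
      exact aux_nonneg (c j) 1 hc0 hc1 (by norm_num)
  have hf1 : 1 ≤ f 1 := by
    have h := Finset.single_le_sum hnonneg1 (show 1 ∈ Finset.Icc 1 m by simp [hm])
    simpa [hg] using h
  -- IVT : find t with f t = 1
  obtain ⟨t, ht01, htf⟩ :=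
    intermediate_value_Icc zero_le_one hcont.continuousOn
      (show (1 : ℝ) ∈ Set.Icc (f 0) (f 1) by rw [hf0]; exact ⟨zero_le_one, hf1⟩)
  have htpos : 0 < t := by
    have : f 0 < f t := by rw [hf0, htf]; norm_num
    exact hmono.lt_iff_lt.1 this
  refine ⟨fun j => g j t, ⟨?_, ?_, ?_⟩, ?_⟩
  · -- positivity
    intro j hj
    simp only [Finset.mem_Icc] at hj
    by_cases h1 : j = 1
    · simpa [hg, h1] using htpos
    · obtain ⟨hc0, hc1⟩ := hc01 j (by omega) hj.2
      simpa [hg, h1] using aux_pos (c j) t hc0 hc1 htpos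
  · -- sum
    exact htf
  · -- equations
    intro j hj
    simp only [Finset.mem_Icc] at hj
    have h1 : j ≠ 1 := by omega
    obtain ⟨hc0, hc1⟩ := hc01 j hj.1 hj.2
    have hg1 : g 1 t = t := by simp [hg]
    have hgj : g j t = -Real.log (1 - c j * (1 - Real.exp (-t))) := by
      simp [hg, h1]
    show 1 - Real.exp (-(g j t)) = (1 - r (j - 1) / r j) * (1 - Real.exp (-(g 1 t)))
    rw [hg1, hgj, aux_eq (c j) t hc0 hc1]
  · -- uniqueness
    rintro β ⟨hβpos, hβsum, hβeq⟩ j hj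
    have hs : 0 < β 1 := hβpos 1 (by simp [hm])
    have hβg : ∀ k ∈ Finset.Icc 1 m, β k = g k (β 1) := by
      intro k hk
      simp only [Finset.mem_Icc] at hk
      by_cases h1 : k = 1
      · simp [hg, h1]
      · obtain ⟨hc0, hc1⟩ := hc01 k (by omega) hk.2
        have heq := hβeq k (by simp [Finset.mem_Icc]; omega)
        have hck : (1 - r (k - 1) / r k) = c k := rfl
        rw [hck] at heq
        have hexp : Real.exp (-(β k)) = 1 - c k * (1 - Real.exp (-(β 1))) := by
          linarith
        have hlog := congrArg Real.log hexp
        rw [Real.log_exp] at hlog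
        simp only [hg, if_neg h1]
        linarith
    have hfs : f (β 1) = 1 := by
      rw [show f (β 1) = ∑ k ∈ Finset.Icc 1 m, g k (β 1) from rfl,
        ← Finset.sum_congr rfl hβg]
      exact hβsum
    have hst : β 1 = t := hmono.injective (by rw [hfs, htf])
    rw [hβg j hj, hst]
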